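/- If a set of triplets τ is consistent with some rooted tree, then the directed graph G_τ is a directed acyclic graph (it contains no directed cycle). -/

import Mathlib

/-- A rooted (phylogenetic) tree on the taxa set `X`, presented abstractly via its
ancestor relation: `anc u v` means `u` is an ancestor of `v` (reflexively).
Ancestors of a fixed node are totally ordered, every pair of nodes has a
lowest common ancestor `lca`, `depth` is the distance from the root, and the
leaves are distinctly labeled by `X` and are minimal nodes. -/
structure PhyloTree (X : Type) where
  V : Type
  [fin : Fintype V]
  anc : V → V → Prop
  anc_refl : ∀ v, anc v v
  anc_trans : ∀ u v w, anc u v → anc v w → anc u w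
  anc_antisymm : ∀ u v, anc u v → anc v u → u = v
  root : V
  root_anc : ∀ v, anc root v
  anc_total : ∀ u v w, anc u w → anc v w → anc u v ∨ anc v u
  lca : V → V → V
  lca_anc_left : ∀ u v, anc (lca u v) u
  lca_anc_right : ∀ u v, anc (lca u v) v
  lca_greatest : ∀ u v w, anc w u → anc w v → anc w (lca u v)
  depth : V → ℕ
  depth_root : depth root = 0
  depth_strict : ∀ u v, anc u v → u ≠ v → depth u < depth v
  leaf : X → V
  leaf_inj : Function.Injective leaf
  leaf_min : ∀ (x : X) (v : V), anc (leaf x) v → v = leaf x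

/-- `l_T`: the length of the longest path starting from the root, i.e. the maximal depth. -/
noncomputable def PhyloTree.lT {X : Type} (T : PhyloTree X) : ℕ := sSup (Set.range T.depth)

/-- The height function of the tree `T`: `h_T(i,j) = l_T − depth(lca(i,j))`. -/
noncomputable def PhyloTree.hgt {X : Type} (T : PhyloTree X) (i j : X) : ℕ :=
  T.lT - T.depth (T.lca (T.leaf i) (T.leaf j))

/-- The triplet `ij|k` is consistent with `T`: the lowest common ancestor of `i` and `j`
is a proper descendant of the lowest common ancestor of `i` and `k`. -/
def PhyloTree.Consistent {X : Type} (T : PhyloTree X) (i j k : X) : Prop :=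
  T.anc (T.lca (T.leaf i) (T.leaf k)) (T.lca (T.leaf i) (T.leaf j)) ∧
    T.lca (T.leaf i) (T.leaf k) ≠ T.lca (T.leaf i) (T.leaf j)

/-- The directed graph `G_τ` of a triplet set `τ`: vertices are unordered pairs,
and each triplet `ij|k ∈ τ` contributes the edges `{i,j} → {i,k}` and `{i,j} → {j,k}`. -/
def GTauEdge {X : Type} (τ : Set (X × X × X)) (p q : Sym2 X) : Prop :=
  ∃ i j k : X, (i, j, k) ∈ τ ∧ p = s(i, j) ∧ (q = s(i, k) ∨ q = s(j, k))

/-- if a set of triplets `τ` is consistent with some rooted tree,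
then the directed graph `G_τ` contains no directed cycle. -/
theorem Gtau_acyclic_of_tree_consistent {X : Type} (τ : Set (X × X × X))
    (h : ∃ T : PhyloTree X, ∀ t ∈ τ, T.Consistent t.1 t.2.1 t.2.2) :
    ∀ p : Sym2 X, ¬ Relation.TransGen (GTauEdge τ) p p := by
  obtain ⟨T, hT⟩ := h
  -- lca is symmetric
  have lca_comm : ∀ u v, T.lca u v = T.lca v u := fun u v =>
    T.anc_antisymm _ _
      (T.lca_greatest _ _ _ (T.lca_anc_right u v) (T.lca_anc_left u v))
      (T.lca_greatest _ _ _ (T.lca_anc_right v u) (T.lca_anc_left v u))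
  -- measure on pairs
  set f : Sym2 X → ℕ := Sym2.lift ⟨fun i j => T.depth (T.lca (T.leaf i) (T.leaf j)),
    fun i j => by simp only []; rw [lca_comm]⟩ with hf
  -- key: for consistent i j k, lca(j,k) = lca(i,k)
  have key : ∀ i j k, T.Consistent i j k →
      T.lca (T.leaf j) (T.leaf k) = T.lca (T.leaf i) (T.leaf k) := by
    intro i j k ⟨hab, hne⟩
    set a := T.lca (T.leaf i) (T.leaf k)
    set b := T.lca (T.leaf i) (T.leaf j)
    set c := T.lca (T.leaf j) (T.leaf k)
    have haj : T.anc a (T.leaf j) := T.anc_trans _ _ _ hab (T.lca_anc_right _ _)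
    have hac : T.anc a c := T.lca_greatest _ _ _ haj (T.lca_anc_right _ _)
    -- b and c are both ancestors of leaf j
    rcases T.anc_total b c (T.leaf j) (T.lca_anc_right _ _) (T.lca_anc_left _ _) with hbc | hcb
    · -- b anc c, so b anc k, so b anc a, contradiction with a ≠ b
      have hbk : T.anc b (T.leaf k) := T.anc_trans _ _ _ hbc (T.lca_anc_right _ _)
      have hba : T.anc b a := T.lca_greatest _ _ _ (T.lca_anc_left _ _) hbk
      exact absurd (T.anc_antisymm _ _ hab hba) hne
    · -- c anc b, so c anc i, so c anc a; with a anc c, c = a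
      have hci : T.anc c (T.leaf i) := T.anc_trans _ _ _ hcb (T.lca_anc_left _ _)
      have hca : T.anc c a := T.lca_greatest _ _ _ hci (T.lca_anc_right _ _)
      exact T.anc_antisymm _ _ hca hac
  -- every edge strictly decreases f
  have step : ∀ p q, GTauEdge τ p q → f q < f p := by
    rintro p q ⟨i, j, k, hmem, rfl, hq⟩
    have hc := hT _ hmem
    obtain ⟨hab, hne⟩ := hc
    have hdep : T.depth (T.lca (T.leaf i) (T.leaf k)) <
        T.depth (T.lca (T.leaf i) (T.leaf j)) := T.depth_strict _ _ hab hne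
    rcases hq with rfl | rfl
    · simpa [hf] using hdep
    · simp only [hf, Sym2.lift_mk]
      rw [key i j k ⟨hab, hne⟩]
      exact hdep
  intro p hp
  have h2 : Relation.TransGen (fun a b : Sym2 X => f b < f a) p p := Relation.TransGen.mono step p p hp
  have gen : ∀ q, Relation.TransGen (fun a b : Sym2 X => f b < f a) p q → f q < f p := by
    intro q hq
    induction hq with
    | single h => exact h
    | tail _ h ih => exact h.trans ih
  exact lt_irrefl _ (gen p h2)
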